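/- (Asymptotic single-bit probability, used in the proof of Theorem 2) Let Ω be an LT output degree distribution and let λ ∈ (0,1). For every h ≥ d_max let l_h be an integer with 1 ≤ l_h ≤ h and l_h/h → λ as h → ∞. Then p_{l_h} → ρ_λ as h → ∞, where p_l is computed with parameter h. -/

import Mathlib

open Finset Filter
open scoped Nat

/-- `ρ_λ = (1/2)·Σ_{j=1}^{dmax} Ω_j·(1 − (1 − 2λ)^j)`. -/
noncomputable def rho (dmax : ℕ) (Ω : ℕ → ℝ) (lam : ℝ) : ℝ :=
  (1 / 2) * ∑ j ∈ Finset.Icc 1 dmax, Ω j * (1 - (1 - 2 * lam) ^ j)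

/-- `p_{j,l} = Σ_{i odd, max(1, l+j−h) ≤ i ≤ min(l,j)} C(j,i)·C(h−j, l−i)/C(h,l)`. -/
noncomputable def pjl (h j l : ℕ) : ℝ :=
  ∑ i ∈ (Finset.Icc (max 1 (l + j - h)) (min l j)).filter (fun i => Odd i),
    ((j.choose i : ℝ) * ((h - j).choose (l - i) : ℝ)) / (h.choose l : ℝ)

/-- `p_l = Σ_{j=1}^{dmax} Ω_j · p_{j,l}`. -/
noncomputable def pl (dmax : ℕ) (Ω : ℕ → ℝ) (h l : ℕ) : ℝ :=
  ∑ j ∈ Finset.Icc 1 dmax, Ω j * pjl h j l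

open scoped Nat

lemma cast_descFactorial {n k : ℕ} (h : k ≤ n) :
    (n.descFactorial k : ℝ) = n ! / (n - k)! := by
  have h2 := Nat.factorial_mul_descFactorial h
  have : ((n-k)! : ℝ) ≠ 0 := by positivity
  field_simp
  rw [mul_comm]
  exact_mod_cast h2

lemma aux_term_eq (h j l i : ℕ) (hij : i ≤ j) (hil : i ≤ l) (hlj : l + j ≤ h) :
    ((h - j).choose (l - i) : ℝ) / (h.choose l : ℝ)
      = (l.descFactorial i : ℝ) * ((h - l).descFactorial (j - i) : ℝ)
        / (h.descFactorial j : ℝ) := by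
  obtain ⟨b, rfl⟩ := Nat.exists_eq_add_of_le hij
  obtain ⟨c, rfl⟩ := Nat.exists_eq_add_of_le hil
  obtain ⟨e, rfl⟩ : ∃ e, h = (i + c) + (i + b) + e := ⟨h - ((i+c)+(i+b)), by omega⟩
  have e1 : (i + c) + (i + b) + e - (i + b) = i + (c + e) := by omega
  have e2 : i + c - i = c := by omega
  have e3 : (i + c) + (i + b) + e - (i + c) = i + (b + e) := by omega
  have e4 : i + b - i = b := by omega
  rw [e1, e2, e3, e4]
  rw [Nat.cast_choose ℝ (show c ≤ i + (c+e) by omega),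
      Nat.cast_choose ℝ (show i + c ≤ (i+c)+(i+b)+e by omega),
      cast_descFactorial (show i ≤ i + c by omega),
      cast_descFactorial (show b ≤ i + (b+e) by omega),
      cast_descFactorial (show i + b ≤ (i+c)+(i+b)+e by omega)]
  have e5 : i + (c + e) - c = i + e := by omega
  have e6 : (i+c)+(i+b)+e - (i+c) = i + (b + e) := by omega
  have e7 : i + c - i = c := by omega
  have e8 : i + (b+e) - b = i + e := by omega
  have e9 : (i+c)+(i+b)+e - (i+b) = i + (c+e) := by omega
  rw [e5, e6, e7, e8, e9]
  have f1 : ((i+e)! : ℝ) ≠ 0 := by positivity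
  have f2 : (c ! : ℝ) ≠ 0 := by positivity
  have f3 : ((i+c)! : ℝ) ≠ 0 := by positivity
  have f4 : ((i+(b+e))! : ℝ) ≠ 0 := by positivity
  have f5 : ((i+(c+e))! : ℝ) ≠ 0 := by positivity
  have f6 : (((i+c)+(i+b)+e)! : ℝ) ≠ 0 := by positivity
  field_simp


lemma term_tendsto (lam : ℝ) (hlam : lam ∈ Set.Ioo (0:ℝ) 1)
    (l : ℕ → ℕ) (hle : ∀ᶠ h : ℕ in atTop, l h ≤ h)
    (hconv : Tendsto (fun h : ℕ => (l h : ℝ) / h) atTop (nhds lam))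
    (j i : ℕ) (hij : i ≤ j) :
    Tendsto (fun h : ℕ =>
        ((j.choose i : ℝ) * ((h - j).choose (l h - i) : ℝ)) / (h.choose (l h) : ℝ))
      atTop (nhds ((j.choose i : ℝ) * (lam ^ i * (1 - lam) ^ (j - i)))) := by
  obtain ⟨hlam0, hlam1⟩ := hlam
  -- l h → ∞ and h - l h → ∞
  have hcast : Tendsto (fun h : ℕ => (h : ℝ)) atTop atTop := tendsto_natCast_atTop_atTop
  have htl : Tendsto (fun h : ℕ => (l h : ℝ)) atTop atTop := by
    apply Tendsto.congr' (f₁ := fun h : ℕ => ((l h : ℝ) / h) * h)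
    · filter_upwards [eventually_ge_atTop 1] with h h1
      field_simp
    · exact Tendsto.pos_mul_atTop hlam0 hconv hcast
  have hth : Tendsto (fun h : ℕ => (h : ℝ) - l h) atTop atTop := by
    apply Tendsto.congr' (f₁ := fun h : ℕ => (1 - (l h : ℝ) / h) * h)
    · filter_upwards [eventually_ge_atTop 1] with h h1
      field_simp
    · exact Tendsto.pos_mul_atTop (by linarith) (tendsto_const_nhds.sub hconv) hcast
  have hA : ∀ᶠ h : ℕ in atTop, j ≤ l h := by
    filter_upwards [htl.eventually_ge_atTop (j : ℝ)] with h hh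
    exact_mod_cast hh
  have hB : ∀ᶠ h : ℕ in atTop, l h + j ≤ h := by
    filter_upwards [hth.eventually_ge_atTop (j : ℝ), hle] with h hh hle'
    have : (l h : ℝ) + j ≤ h := by linarith
    exact_mod_cast this
  -- the limit of the product form
  have hm0 : ∀ m : ℕ, Tendsto (fun h : ℕ => (m : ℝ) / h) atTop (nhds 0) :=
    fun m => tendsto_const_div_atTop_nhds_zero_nat (m : ℝ)
  have P1 : Tendsto (fun h : ℕ => ∏ m ∈ range i, (((l h : ℝ) - m) / h)) atTop
      (nhds (lam ^ i)) := by
    have := tendsto_finset_prod (range i)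
      (fun m _ => (show Tendsto (fun h : ℕ => ((l h : ℝ) - m) / h) atTop (nhds lam) by
        have : Tendsto (fun h : ℕ => (l h : ℝ) / h - m / h) atTop (nhds (lam - 0)) :=
          hconv.sub (hm0 m)
        simpa [sub_div] using this))
    simpa using this
  have P2 : Tendsto (fun h : ℕ => ∏ m ∈ range (j - i), (((h : ℝ) - l h - m) / h)) atTop
      (nhds ((1 - lam) ^ (j - i))) := by
    have := tendsto_finset_prod (range (j - i))
      (fun m _ => (show Tendsto (fun h : ℕ => ((h : ℝ) - l h - m) / h) atTop (nhds (1 - lam)) by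
        have h2 : Tendsto (fun h : ℕ => (h : ℝ) / h - (l h : ℝ) / h - m / h) atTop
            (nhds (1 - lam - 0)) := by
          refine Tendsto.sub (Tendsto.sub ?_ hconv) (hm0 m)
          apply Tendsto.congr' (f₁ := fun _ : ℕ => (1:ℝ))
          · filter_upwards [eventually_ge_atTop 1] with h h1
            have : (h:ℝ) ≠ 0 := by positivity
            field_simp
          · exact tendsto_const_nhds
        simpa [sub_div] using h2))
    simpa using this
  have P3 : Tendsto (fun h : ℕ => ∏ m ∈ range j, (((h : ℝ) - m) / h)) atTop
      (nhds 1) := by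
    have := tendsto_finset_prod (range j)
      (fun m _ => (show Tendsto (fun h : ℕ => ((h : ℝ) - m) / h) atTop (nhds 1) by
        have h2 : Tendsto (fun h : ℕ => (h : ℝ) / h - m / h) atTop (nhds (1 - 0)) := by
          refine Tendsto.sub ?_ (hm0 m)
          apply Tendsto.congr' (f₁ := fun _ : ℕ => (1:ℝ))
          · filter_upwards [eventually_ge_atTop 1] with h h1
            have : (h:ℝ) ≠ 0 := by positivity
            field_simp
          · exact tendsto_const_nhds
        simpa [sub_div] using h2))
    simpa using this
  have lim : Tendsto (fun h : ℕ => (j.choose i : ℝ) *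
      ((∏ m ∈ range i, (((l h : ℝ) - m) / h)) * (∏ m ∈ range (j - i), (((h : ℝ) - l h - m) / h))
        / (∏ m ∈ range j, (((h : ℝ) - m) / h)))) atTop
      (nhds ((j.choose i : ℝ) * (lam ^ i * (1 - lam) ^ (j - i)))) := by
    have := ((P1.mul P2).div P3 one_ne_zero).const_mul (j.choose i : ℝ)
    simpa using this
  refine Filter.Tendsto.congr' ?_ lim
  filter_upwards [hA, hB, eventually_ge_atTop 1] with h hA' hB' h1
  have hil : i ≤ l h := le_trans hij hA'
  have hlh : l h ≤ h := by omega
  have hjh : j ≤ h := by omega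
  have hh0 : (h:ℝ) ≠ 0 := by positivity
  have q1 : (((l h).descFactorial i : ℕ) : ℝ) = ∏ m ∈ range i, ((l h : ℝ) - m) := by
    rw [Nat.descFactorial_eq_prod_range, Nat.cast_prod]
    exact Finset.prod_congr rfl fun m hm =>
      Nat.cast_sub (le_trans (le_of_lt (mem_range.mp hm)) hil)
  have q2 : (((h - l h).descFactorial (j - i) : ℕ) : ℝ)
      = ∏ m ∈ range (j - i), ((h : ℝ) - l h - m) := by
    rw [Nat.descFactorial_eq_prod_range, Nat.cast_prod]
    refine Finset.prod_congr rfl fun m hm => ?_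
    have hm' : m < j - i := mem_range.mp hm
    rw [Nat.cast_sub (by omega), Nat.cast_sub (by omega)]
  have q3 : ((h.descFactorial j : ℕ) : ℝ) = ∏ m ∈ range j, ((h : ℝ) - m) := by
    rw [Nat.descFactorial_eq_prod_range, Nat.cast_prod]
    exact Finset.prod_congr rfl fun m hm =>
      Nat.cast_sub (le_trans (le_of_lt (mem_range.mp hm)) hjh)
  have hC : (∏ m ∈ range j, ((h:ℝ) - m)) ≠ 0 := by
    rw [← q3]
    exact_mod_cast fun hz => absurd (Nat.descFactorial_eq_zero_iff_lt.mp
      (by exact_mod_cast hz)) (by omega)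
  have key := aux_term_eq h j (l h) i hij hil hB'
  show (j.choose i : ℝ) * _ = _
  conv_rhs => rw [mul_div_assoc, key, q1, q2, q3]
  congr 1
  rw [Finset.prod_div_distrib, Finset.prod_div_distrib,
    Finset.prod_div_distrib, Finset.prod_const, Finset.prod_const, Finset.prod_const,
    Finset.card_range, Finset.card_range, Finset.card_range]
  have hpow : (h:ℝ) ^ i * (h:ℝ) ^ (j - i) = (h:ℝ) ^ j := by
    rw [← pow_add]; congr 1; omega
  rw [div_mul_div_comm]
  rw [hpow, div_div_div_cancel_right₀]
  exact pow_ne_zero _ hh0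


lemma odd_sum (j : ℕ) (lam : ℝ) :
    ∑ i ∈ (Finset.Icc 1 j).filter (fun i => Odd i),
      (j.choose i : ℝ) * lam ^ i * (1 - lam) ^ (j - i)
      = (1 - (1 - 2 * lam) ^ j) / 2 := by
  have hset : (Finset.Icc 1 j).filter (fun i => Odd i)
      = (Finset.range (j+1)).filter (fun i => Odd i) := by
    ext i
    simp only [mem_filter, mem_Icc, mem_range]
    constructor
    · rintro ⟨⟨h1, h2⟩, h3⟩; exact ⟨by omega, h3⟩
    · rintro ⟨h1, h3⟩
      refine ⟨⟨?_, by omega⟩, h3⟩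
      rcases h3 with ⟨k, rfl⟩; omega
  rw [hset]
  have h1 : (lam + (1 - lam)) ^ j
      = ∑ i ∈ Finset.range (j+1), lam ^ i * (1-lam) ^ (j-i) * (j.choose i : ℝ) :=
    add_pow lam (1-lam) j
  have h2 : ((1 - lam) + (-lam)) ^ j
      = ∑ i ∈ Finset.range (j+1), (1-lam) ^ (j-i) * (-lam) ^ i * (j.choose i : ℝ) := by
    rw [add_comm, add_pow (-lam) (1-lam) j]
    apply Finset.sum_congr rfl; intro i _; ring
  have key : 1 - (1 - 2*lam) ^ j
      = ∑ i ∈ Finset.range (j+1), (lam ^ i - (-lam) ^ i) * (1-lam) ^ (j-i) * (j.choose i : ℝ) := by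
    have e : 1 - (1 - 2*lam) ^ j = (lam + (1 - lam)) ^ j - ((1 - lam) + (-lam)) ^ j := by
      ring_nf
    rw [e, h1, h2, ← Finset.sum_sub_distrib]
    apply Finset.sum_congr rfl; intro i _; ring
  have key2 : ∑ i ∈ Finset.range (j+1), (lam ^ i - (-lam) ^ i) * (1-lam) ^ (j-i) * (j.choose i : ℝ)
      = 2 * ∑ i ∈ (Finset.range (j+1)).filter (fun i => Odd i),
          (j.choose i : ℝ) * lam ^ i * (1 - lam) ^ (j - i) := by
    rw [Finset.mul_sum, Finset.sum_filter]
    apply Finset.sum_congr rfl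
    intro i _
    by_cases hi : Odd i
    · rw [if_pos hi, hi.neg_pow]; ring
    · rw [if_neg hi, (Nat.not_odd_iff_even.mp hi).neg_pow]; ring
  rw [key2] at key
  linarith


lemma ev_bounds (lam : ℝ) (hlam : lam ∈ Set.Ioo (0:ℝ) 1)
    (l : ℕ → ℕ) (hle : ∀ᶠ h : ℕ in atTop, l h ≤ h)
    (hconv : Tendsto (fun h : ℕ => (l h : ℝ) / h) atTop (nhds lam)) (j : ℕ) :
    ∀ᶠ h : ℕ in atTop, j ≤ l h ∧ l h + j ≤ h := by
  obtain ⟨hlam0, hlam1⟩ := hlam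
  have hcast : Tendsto (fun h : ℕ => (h : ℝ)) atTop atTop := tendsto_natCast_atTop_atTop
  have htl : Tendsto (fun h : ℕ => (l h : ℝ)) atTop atTop := by
    apply Tendsto.congr' (f₁ := fun h : ℕ => ((l h : ℝ) / h) * h)
    · filter_upwards [eventually_ge_atTop 1] with h h1
      field_simp
    · exact Tendsto.pos_mul_atTop hlam0 hconv hcast
  have hth : Tendsto (fun h : ℕ => (h : ℝ) - l h) atTop atTop := by
    apply Tendsto.congr' (f₁ := fun h : ℕ => (1 - (l h : ℝ) / h) * h)
    · filter_upwards [eventually_ge_atTop 1] with h h1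
      field_simp
    · exact Tendsto.pos_mul_atTop (by linarith) (tendsto_const_nhds.sub hconv) hcast
  filter_upwards [htl.eventually_ge_atTop (j : ℝ), hth.eventually_ge_atTop (j : ℝ), hle]
    with h h2 h3 h4
  constructor
  · exact_mod_cast h2
  · have : (l h : ℝ) + j ≤ h := by linarith
    exact_mod_cast this

lemma pjl_tendsto (lam : ℝ) (hlam : lam ∈ Set.Ioo (0:ℝ) 1)
    (l : ℕ → ℕ) (hle : ∀ᶠ h : ℕ in atTop, l h ≤ h)
    (hconv : Tendsto (fun h : ℕ => (l h : ℝ) / h) atTop (nhds lam)) (j : ℕ) :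
    Tendsto (fun h : ℕ => pjl h j (l h)) atTop (nhds ((1 - (1 - 2 * lam) ^ j) / 2)) := by
  have S : Tendsto (fun h : ℕ => ∑ i ∈ (Finset.Icc 1 j).filter (fun i => Odd i),
      ((j.choose i : ℝ) * ((h - j).choose (l h - i) : ℝ)) / (h.choose (l h) : ℝ))
      atTop (nhds (∑ i ∈ (Finset.Icc 1 j).filter (fun i => Odd i),
        (j.choose i : ℝ) * (lam ^ i * (1 - lam) ^ (j - i)))) := by
    apply tendsto_finset_sum
    intro i hi
    have hij : i ≤ j := (mem_Icc.mp (mem_filter.mp hi).1).2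
    exact term_tendsto lam hlam l hle hconv j i hij
  have heq : (∑ i ∈ (Finset.Icc 1 j).filter (fun i => Odd i),
      (j.choose i : ℝ) * (lam ^ i * (1 - lam) ^ (j - i))) = (1 - (1 - 2 * lam) ^ j) / 2 := by
    rw [← odd_sum j lam]
    exact Finset.sum_congr rfl fun i _ => by ring
  rw [← heq]
  refine Filter.Tendsto.congr' ?_ S
  filter_upwards [ev_bounds lam hlam l hle hconv j] with h ⟨hA, hB⟩
  unfold pjl
  congr 1
  rw [Nat.sub_eq_zero_of_le hB, min_eq_right hA]
  norm_num

/-- Asymptotic single-bit probability (used in the proof of Theorem 2): if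
`1 ≤ l_h ≤ h` (for `h ≥ dmax`) and `l_h/h → λ ∈ (0,1)` as `h → ∞`, then
`p_{l_h} → ρ_λ`. -/
theorem stmt_19 (dmax : ℕ) (Ω : ℕ → ℝ)
    (hΩpos : ∀ j ∈ Finset.Icc 1 dmax, 0 ≤ Ω j)
    (hΩsum : ∑ j ∈ Finset.Icc 1 dmax, Ω j = 1)
    (lam : ℝ) (hlam : lam ∈ Set.Ioo (0 : ℝ) 1)
    (l : ℕ → ℕ) (hl : ∀ h : ℕ, dmax ≤ h → 1 ≤ l h ∧ l h ≤ h)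
    (hconv : Tendsto (fun h : ℕ => (l h : ℝ) / (h : ℝ)) atTop (nhds lam)) :
    Tendsto (fun h : ℕ => pl dmax Ω h (l h)) atTop (nhds (rho dmax Ω lam)) := by
  have hle : ∀ᶠ h : ℕ in atTop, l h ≤ h :=
    eventually_atTop.2 ⟨dmax, fun h hh => (hl h hh).2⟩
  have hrho : rho dmax Ω lam
      = ∑ j ∈ Finset.Icc 1 dmax, Ω j * ((1 - (1 - 2 * lam) ^ j) / 2) := by
    unfold rho
    rw [Finset.mul_sum]
    exact Finset.sum_congr rfl fun j _ => by ring
  rw [hrho]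
  unfold pl
  exact tendsto_finset_sum _ fun j _ =>
    (pjl_tendsto lam hlam l hle hconv j).const_mul (Ω j)
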